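/- Let J_C be a neural ideal. If the canonical form CF(J_C) is a Gröbner basis of J_C with respect to some monomial ordering, then CF(J_C) is a Gröbner basis of J_C with respect to every monomial ordering (i.e., it is a universal Gröbner basis). -/

import Mathlib

open MvPolynomial

universe u

/-- The pseudo-monomial `x_σ * ∏_{j ∈ τ} (1 + x_j)` in `F₂[x₁,…,xₙ]`. -/
noncomputable def psm {n : ℕ} (σ τ : Finset (Fin n)) : MvPolynomial (Fin n) (ZMod 2) :=
  (∏ i ∈ σ, X i) * ∏ j ∈ τ, (1 + X j)

/-- A polynomial is a pseudo-monomial if it equals `psm σ τ` for disjoint `σ τ`. -/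
def IsPseudoMonomial {n : ℕ} (f : MvPolynomial (Fin n) (ZMod 2)) : Prop :=
  ∃ σ τ : Finset (Fin n), Disjoint σ τ ∧ f = psm σ τ

/-- The characteristic polynomial `ρ_v = ∏ i (1 - v_i - x_i)` of a point `v ∈ {0,1}ⁿ`. -/
noncomputable def rho {n : ℕ} (v : Fin n → ZMod 2) : MvPolynomial (Fin n) (ZMod 2) :=
  ∏ i, (1 - C (v i) - X i)

/-- The neural ideal `J_C` of a code `Co ⊆ {0,1}ⁿ`. -/
noncomputable def neuralIdeal {n : ℕ} (Co : Set (Fin n → ZMod 2)) :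
    Ideal (MvPolynomial (Fin n) (ZMod 2)) :=
  Ideal.span {p | ∃ v, v ∉ Co ∧ p = rho v}

/-- The canonical form: the set of minimal pseudo-monomials of an ideal. -/
def canonicalForm {n : ℕ} (J : Ideal (MvPolynomial (Fin n) (ZMod 2))) :
    Set (MvPolynomial (Fin n) (ZMod 2)) :=
  {f | IsPseudoMonomial f ∧ f ∈ J ∧
    ∀ g : MvPolynomial (Fin n) (ZMod 2), IsPseudoMonomial g → g ∈ J → g ∣ f → g = f}

/-- The multidegree (exponent of the leading term) of `f` w.r.t. a monomial order `m`. -/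
noncomputable def leadDeg {n : ℕ} (m : MonomialOrder.{0,u} (Fin n))
    (f : MvPolynomial (Fin n) (ZMod 2)) : Fin n →₀ ℕ :=
  m.toSyn.symm (f.support.sup (fun d => m.toSyn d))

/-- The exponent vector of the square-free monomial `x_ω`. -/
noncomputable def expOf {n : ℕ} (ω : Finset (Fin n)) : Fin n →₀ ℕ :=
  ∑ i ∈ ω, Finsupp.single i 1

/-- `G` is a Gröbner basis of `J` w.r.t. the monomial order `m`: a finite subset of `J`
whose leading terms generate the leading term ideal, i.e. the leading term of every nonzero
element of `J` is divisible by the leading term of some element of `G`. -/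
def IsGB {n : ℕ} (m : MonomialOrder.{0,u} (Fin n)) (J : Ideal (MvPolynomial (Fin n) (ZMod 2)))
    (G : Set (MvPolynomial (Fin n) (ZMod 2))) : Prop :=
  G.Finite ∧ G ⊆ (J : Set (MvPolynomial (Fin n) (ZMod 2))) ∧
    ∀ f ∈ J, f ≠ 0 → ∃ g ∈ G, g ≠ 0 ∧ leadDeg m g ≤ leadDeg m f

/-- A reduced Gröbner basis: every element has leading coefficient 1, and no term of any
element is divisible by the leading term of another element. -/
def IsReducedGB {n : ℕ} (m : MonomialOrder.{0,u} (Fin n))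
    (J : Ideal (MvPolynomial (Fin n) (ZMod 2)))
    (G : Set (MvPolynomial (Fin n) (ZMod 2))) : Prop :=
  IsGB m J G ∧ (∀ g ∈ G, coeff (leadDeg m g) g = 1) ∧
    ∀ f ∈ G, ∀ g ∈ G, g ≠ f → ∀ d ∈ f.support, ¬ leadDeg m g ≤ d

/-- The universal Gröbner basis: the union of all reduced Gröbner bases. -/
def universalGB {n : ℕ} (J : Ideal (MvPolynomial (Fin n) (ZMod 2))) :
    Set (MvPolynomial (Fin n) (ZMod 2)) :=
  {f | ∃ (m : MonomialOrder.{0,u} (Fin n)) (G : Set (MvPolynomial (Fin n) (ZMod 2))),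
    IsReducedGB m J G ∧ f ∈ G}

/-- The receptive field code of a family of sets `U i` in a stimulus space `S`. -/
def rfCode {n : ℕ} {S : Type} (U : Fin n → Set S) : Set (Fin n → ZMod 2) :=
  {c | ((⋂ i ∈ {i : Fin n | c i = 1}, U i) \ ⋃ j ∈ {j : Fin n | c j = 0}, U j).Nonempty}


/-! ### Auxiliary lemmas -/

universe w

section Aux
variable {n : ℕ}

lemma leadDeg_le {m : MonomialOrder.{0,w} (Fin n)} {f : MvPolynomial (Fin n) (ZMod 2)}
    {d : Fin n →₀ ℕ} (hd : d ∈ f.support) : m.toSyn d ≤ m.toSyn (leadDeg m f) := by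
  unfold leadDeg; rw [AddEquiv.apply_symm_apply]; exact Finset.le_sup hd

lemma leadDeg_mem {m : MonomialOrder.{0,w} (Fin n)} {f : MvPolynomial (Fin n) (ZMod 2)}
    (hf : f ≠ 0) : leadDeg m f ∈ f.support := by
  obtain ⟨b, hb, hbe⟩ := f.support.exists_mem_eq_sup
    (Finset.nonempty_iff_ne_empty.mpr (fun h => hf (MvPolynomial.support_eq_empty.mp h)))
    (fun d => m.toSyn d)
  unfold leadDeg; rw [hbe, AddEquiv.symm_apply_apply]; exact hb

lemma prod_X_eq (ω : Finset (Fin n)) :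
    (∏ i ∈ ω, (X i : MvPolynomial (Fin n) (ZMod 2))) = monomial (expOf ω) 1 := by
  classical
  induction ω using Finset.induction with
  | empty => simp [expOf]
  | insert a s h ih =>
      rw [Finset.prod_insert h, ih,
        show (X _ : MvPolynomial (Fin n) (ZMod 2)) = monomial (Finsupp.single _ 1) 1 from rfl,
        monomial_mul, one_mul]
      congr 1
      unfold expOf
      rw [Finset.sum_insert h]

lemma expOf_apply (ω : Finset (Fin n)) (i : Fin n) :
    expOf ω i = if i ∈ ω then 1 else 0 := by
  classical
  unfold expOf
  rw [Finset.sum_apply']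
  simp [Finsupp.single_apply]

lemma expOf_mono {ρ τ : Finset (Fin n)} (h : ρ ⊆ τ) : expOf ρ ≤ expOf τ := by
  classical
  intro i
  unfold expOf
  rw [Finset.sum_apply', Finset.sum_apply']
  simp only [Finsupp.single_apply]
  exact Finset.sum_le_sum_of_subset h

lemma expOf_inj {ρ τ : Finset (Fin n)} (h : expOf ρ = expOf τ) : ρ = τ := by
  classical
  ext i
  have := congrArg (fun f : Fin n →₀ ℕ => f i) h
  simp only [expOf_apply] at this
  by_cases h1 : i ∈ ρ <;> by_cases h2 : i ∈ τ <;> simp [h1, h2] at this ⊢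

lemma psm_eq_sum (σ τ : Finset (Fin n)) :
    psm σ τ = ∑ t ∈ τ.powerset, monomial (expOf σ + expOf (τ \ t)) 1 := by
  classical
  unfold psm
  rw [Finset.prod_add, Finset.mul_sum, prod_X_eq]
  apply Finset.sum_congr rfl
  intro t _
  rw [Finset.prod_const_one, one_mul, prod_X_eq, monomial_mul, one_mul]

lemma coeff_psm_top (σ τ : Finset (Fin n)) :
    coeff (expOf σ + expOf τ) (psm σ τ) = 1 := by
  classical
  rw [psm_eq_sum, MvPolynomial.coeff_sum]
  rw [Finset.sum_eq_single ∅]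
  · simp [coeff_monomial]
  · intro t ht hne
    rw [coeff_monomial, if_neg]
    intro hc
    have h2 : expOf (τ \ t) = expOf τ := add_left_cancel hc
    have h3 : τ \ t = τ := expOf_inj h2
    have h4 : Disjoint τ t := Finset.sdiff_eq_self_iff_disjoint.mp h3
    exact hne (Finset.bot_eq_empty ▸ h4.symm.eq_bot_of_le (Finset.mem_powerset.mp ht))
  · intro h; exact absurd (Finset.empty_mem_powerset τ) h

lemma support_psm_le (σ τ : Finset (Fin n)) {d : Fin n →₀ ℕ} (hd : d ∈ (psm σ τ).support) :
    d ≤ expOf σ + expOf τ := by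
  classical
  rw [psm_eq_sum] at hd
  have := MvPolynomial.support_sum hd
  rw [Finset.mem_biUnion] at this
  obtain ⟨t, ht, hdt⟩ := this
  rw [MvPolynomial.support_monomial, if_neg one_ne_zero, Finset.mem_singleton] at hdt
  subst hdt
  exact add_le_add_right (expOf_mono (Finset.sdiff_subset)) _

lemma psm_ne_zero (σ τ : Finset (Fin n)) : psm σ τ ≠ 0 := by
  intro h
  have := coeff_psm_top σ τ
  rw [h, coeff_zero] at this
  exact one_ne_zero this.symm

lemma leadDeg_psm (m : MonomialOrder.{0,w} (Fin n)) (σ τ : Finset (Fin n)) :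
    leadDeg m (psm σ τ) = expOf σ + expOf τ := by
  have h1 : expOf σ + expOf τ ∈ (psm σ τ).support := by
    rw [MvPolynomial.mem_support_iff, coeff_psm_top]; exact one_ne_zero
  apply m.toSyn.injective
  apply le_antisymm
  · have := leadDeg_mem (m := m) (psm_ne_zero σ τ)
    exact m.toSyn_monotone (support_psm_le σ τ this)
  · exact leadDeg_le h1

lemma leadDeg_mul {m : MonomialOrder.{0,w} (Fin n)} {a b : MvPolynomial (Fin n) (ZMod 2)}
    (ha : a ≠ 0) (hb : b ≠ 0) : leadDeg m (a * b) = leadDeg m a + leadDeg m b := by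
  classical
  have hco : coeff (leadDeg m a + leadDeg m b) (a * b) =
      coeff (leadDeg m a) a * coeff (leadDeg m b) b := by
    rw [MvPolynomial.coeff_mul]
    refine Finset.sum_eq_single_of_mem (leadDeg m a, leadDeg m b)
      (Finset.HasAntidiagonal.mem_antidiagonal.mpr rfl) ?_
    intro p hp hne
    rw [Finset.HasAntidiagonal.mem_antidiagonal] at hp
    by_contra hc
    have h1 : p.1 ∈ a.support := MvPolynomial.mem_support_iff.mpr (left_ne_zero_of_mul hc)
    have h2 : p.2 ∈ b.support := MvPolynomial.mem_support_iff.mpr (right_ne_zero_of_mul hc)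
    have e1 : m.toSyn p.1 ≤ m.toSyn (leadDeg m a) := leadDeg_le h1
    have e2 : m.toSyn p.2 ≤ m.toSyn (leadDeg m b) := leadDeg_le h2
    have es : m.toSyn p.1 + m.toSyn p.2 = m.toSyn (leadDeg m a) + m.toSyn (leadDeg m b) := by
      rw [← map_add, ← map_add, hp]
    have q1 : m.toSyn p.1 = m.toSyn (leadDeg m a) := by
      by_contra hq
      exact absurd es (ne_of_lt (add_lt_add_of_lt_of_le (lt_of_le_of_ne e1 hq) e2))
    have q2 : m.toSyn p.2 = m.toSyn (leadDeg m b) := by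
      have := es; rw [q1] at this; exact add_left_cancel this
    exact hne (Prod.ext (m.toSyn.injective q1) (m.toSyn.injective q2))
  have hne : coeff (leadDeg m a) a * coeff (leadDeg m b) b ≠ 0 :=
    mul_ne_zero (MvPolynomial.mem_support_iff.mp (leadDeg_mem ha))
      (MvPolynomial.mem_support_iff.mp (leadDeg_mem hb))
  have hmem : leadDeg m a + leadDeg m b ∈ (a * b).support := by
    rw [MvPolynomial.mem_support_iff, hco]; exact hne
  apply m.toSyn.injective
  apply le_antisymm
  · have hab : a * b ≠ 0 := fun h => by simp [h] at hmem
    have := leadDeg_mem (m := m) hab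
    obtain ⟨x, hx, y, hy, hxy⟩ := Finset.mem_add.mp (MvPolynomial.support_mul a b this)
    calc m.toSyn (leadDeg m (a*b)) = m.toSyn x + m.toSyn y := by rw [← map_add, hxy]
    _ ≤ m.toSyn (leadDeg m a) + m.toSyn (leadDeg m b) := add_le_add (leadDeg_le hx) (leadDeg_le hy)
    _ = m.toSyn (leadDeg m a + leadDeg m b) := (map_add _ _ _).symm
  · exact leadDeg_le hmem

lemma zmod2_eq_one' : ∀ c : ZMod 2, c ≠ 0 → c = 1 := by decide

lemma zmod2_eq_one {c : ZMod 2} (hc : c ≠ 0) : c = 1 := zmod2_eq_one' c hc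

/-- The division algorithm with respect to an arbitrary monomial order, dividing by a set of
polynomials each of whose leading coefficient is `1`. -/
lemma division (m' : MonomialOrder.{0,w} (Fin n))
    (G : Set (MvPolynomial (Fin n) (ZMod 2)))
    (hG : ∀ g ∈ G, coeff (leadDeg m' g) g = 1)
    (f : MvPolynomial (Fin n) (ZMod 2)) :
    ∃ (L : List (MvPolynomial (Fin n) (ZMod 2) × MvPolynomial (Fin n) (ZMod 2)))
      (r : MvPolynomial (Fin n) (ZMod 2)),
      f = (L.map fun p => p.1 * p.2).sum + r ∧
      (∀ p ∈ L, p.2 ∈ G ∧ m'.toSyn (leadDeg m' (p.1 * p.2)) ≤ m'.toSyn (leadDeg m' f)) ∧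
      (∀ d ∈ r.support, ∀ g ∈ G, ¬ leadDeg m' g ≤ d) := by
  classical
  suffices h : ∀ (s : m'.syn) (f : MvPolynomial (Fin n) (ZMod 2)),
      m'.toSyn (leadDeg m' f) = s →
      ∃ (L : List (MvPolynomial (Fin n) (ZMod 2) × MvPolynomial (Fin n) (ZMod 2)))
        (r : MvPolynomial (Fin n) (ZMod 2)),
        f = (L.map fun p => p.1 * p.2).sum + r ∧
        (∀ p ∈ L, p.2 ∈ G ∧ m'.toSyn (leadDeg m' (p.1 * p.2)) ≤ m'.toSyn (leadDeg m' f)) ∧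
        (∀ d ∈ r.support, ∀ g ∈ G, ¬ leadDeg m' g ≤ d) by
    exact h _ f rfl
  intro s
  induction s using WellFoundedLT.induction with
  | _ s IH =>
  intro f hfs
  by_cases hf0 : f = 0
  · exact ⟨[], 0, by simp [hf0], by simp, by simp⟩
  have hdsupp : leadDeg m' f ∈ f.support := leadDeg_mem hf0
  set d := leadDeg m' f with hd
  have hc1 : coeff d f = 1 := zmod2_eq_one (MvPolynomial.mem_support_iff.mp hdsupp)
  by_cases hex : ∃ g ∈ G, leadDeg m' g ≤ d
  · obtain ⟨g, hgG, hgle⟩ := hex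
    set t : MvPolynomial (Fin n) (ZMod 2) := monomial (d - leadDeg m' g) 1 * g with ht
    have hct : coeff d t = 1 := by
      rw [show d = (d - leadDeg m' g) + leadDeg m' g from (tsub_add_cancel_of_le hgle).symm, ht,
        coeff_monomial_mul, one_mul, hG g hgG]
    have htsupp : ∀ e ∈ t.support, m'.toSyn e ≤ m'.toSyn d := by
      intro e he
      obtain ⟨x, hx, y, hy, hxy⟩ := Finset.mem_add.mp (MvPolynomial.support_mul _ g he)
      rw [MvPolynomial.support_monomial, if_neg one_ne_zero, Finset.mem_singleton] at hx
      subst hx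
      calc m'.toSyn e = m'.toSyn (d - leadDeg m' g) + m'.toSyn y := by rw [← map_add, hxy]
      _ ≤ m'.toSyn (d - leadDeg m' g) + m'.toSyn (leadDeg m' g) :=
          add_le_add_right (leadDeg_le hy) _
      _ = m'.toSyn d := by rw [← map_add, tsub_add_cancel_of_le hgle]
    set f' := f - t with hf'
    have hf'supp : ∀ e ∈ f'.support, m'.toSyn e ≤ m'.toSyn d ∧ e ≠ d := by
      intro e he
      constructor
      · rcases Finset.mem_union.mp (MvPolynomial.support_sub _ f t he) with h | h
        · exact leadDeg_le h
        · exact htsupp e h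
      · intro hed
        subst hed
        rw [MvPolynomial.mem_support_iff, hf', MvPolynomial.coeff_sub, hc1, hct] at he
        simp at he
    by_cases hf'0 : f' = 0
    · refine ⟨[(monomial (d - leadDeg m' g) 1, g)], 0, ?_, ?_, by simp⟩
      · have : f = t := by rw [← sub_eq_zero]; exact hf'0
        simp [this, ht]
      · intro p hp
        rw [List.mem_singleton] at hp
        subst hp
        refine ⟨hgG, ?_⟩
        have : f = t := by rw [← sub_eq_zero]; exact hf'0
        rw [← ht, ← this]
    · have hlt : m'.toSyn (leadDeg m' f') < s := by
        rw [← hfs]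
        have hmem := leadDeg_mem (m := m') hf'0
        exact lt_of_le_of_ne (hf'supp _ hmem).1
          (fun hc => (hf'supp _ hmem).2 (m'.toSyn.injective hc))
      obtain ⟨L', r, heq', hb', hr'⟩ := IH _ hlt f' rfl
      refine ⟨(monomial (d - leadDeg m' g) 1, g) :: L', r, ?_, ?_, hr'⟩
      · have : f = t + f' := by rw [hf']; ring
        rw [this, heq', ht]
        simp [add_assoc]
      · intro p hp
        rcases List.mem_cons.mp hp with hp | hp
        · subst hp
          refine ⟨hgG, ?_⟩
          have htne : t ≠ 0 := fun h => by simp [h] at hct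
          have := leadDeg_mem (m := m') htne
          exact htsupp _ this
        · exact ⟨(hb' p hp).1, le_trans (hb' p hp).2 (le_of_lt (hfs ▸ hlt))⟩
  · push_neg at hex
    set t : MvPolynomial (Fin n) (ZMod 2) := monomial d 1 with ht
    set f' := f - t with hf'
    have hf'supp : ∀ e ∈ f'.support, m'.toSyn e ≤ m'.toSyn d ∧ e ≠ d := by
      intro e he
      constructor
      · rcases Finset.mem_union.mp (MvPolynomial.support_sub _ f t he) with h | h
        · exact leadDeg_le h
        · rw [MvPolynomial.support_monomial, if_neg one_ne_zero, Finset.mem_singleton] at h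
          subst h; exact le_refl _
      · intro hed
        subst hed
        rw [MvPolynomial.mem_support_iff, hf', MvPolynomial.coeff_sub, hc1, ht,
          coeff_monomial, if_pos rfl] at he
        simp at he
    by_cases hf'0 : f' = 0
    · refine ⟨[], f, by simp, by simp, ?_⟩
      intro e he g hgG hle
      have : f = t := by rw [← sub_eq_zero]; exact hf'0
      rw [this, ht, MvPolynomial.support_monomial, if_neg one_ne_zero,
        Finset.mem_singleton] at he
      subst he
      exact hex g hgG hle
    · have hlt : m'.toSyn (leadDeg m' f') < s := by
        rw [← hfs]
        have hmem := leadDeg_mem (m := m') hf'0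
        exact lt_of_le_of_ne (hf'supp _ hmem).1
          (fun hc => (hf'supp _ hmem).2 (m'.toSyn.injective hc))
      obtain ⟨L', r, heq', hb', hr'⟩ := IH _ hlt f' rfl
      refine ⟨L', r + t, ?_, ?_, ?_⟩
      · have : f = f' + t := by rw [hf']; ring
        rw [this, heq', add_assoc]
      · intro p hp
        exact ⟨(hb' p hp).1, le_trans (hb' p hp).2 (le_of_lt (hfs ▸ hlt))⟩
      · intro e he g hgG hle
        rcases Finset.mem_union.mp (MvPolynomial.support_add he) with h | h
        · exact hr' e h g hgG hle
        · rw [ht, MvPolynomial.support_monomial, if_neg one_ne_zero,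
            Finset.mem_singleton] at h
          subst h
          exact hex g hgG hle

lemma mem_support_list_sum {L : List (MvPolynomial (Fin n) (ZMod 2))} {d : Fin n →₀ ℕ}
    (hd : d ∈ L.sum.support) : ∃ x ∈ L, d ∈ x.support := by
  classical
  induction L with
  | nil => simp at hd
  | cons a l ih =>
      rw [List.sum_cons] at hd
      rcases Finset.mem_union.mp (MvPolynomial.support_add hd) with h | h
      · exact ⟨a, List.mem_cons_self, h⟩
      · obtain ⟨x, hx, hxd⟩ := ih h
        exact ⟨x, List.mem_cons_of_mem a hx, hxd⟩

end Aux

/-- if the canonical form of a neural ideal is a Gröbner basis w.r.t. some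
monomial ordering, then it is a Gröbner basis w.r.t. every monomial ordering. -/
theorem stmt9 {n : ℕ} (Co : Set (Fin n → ZMod 2)) (m : MonomialOrder.{0,u} (Fin n))
    (h : IsGB m (neuralIdeal Co) (canonicalForm (neuralIdeal Co))) :
    ∀ m' : MonomialOrder.{0,v} (Fin n),
      IsGB m' (neuralIdeal Co) (canonicalForm (neuralIdeal Co)) := by
  intro m'
  obtain ⟨hfin, hsub, hdiv⟩ := h
  refine ⟨hfin, hsub, ?_⟩
  intro f hfJ hf0
  have hG1 : ∀ g ∈ canonicalForm (neuralIdeal Co), coeff (leadDeg m' g) g = 1 := by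
    intro g hg
    obtain ⟨σ, τ, -, rfl⟩ := hg.1
    rw [leadDeg_psm, coeff_psm_top]
  obtain ⟨L, r, hfe, hLb, hrc⟩ := division m' _ hG1 f
  have hsumJ : (L.map fun p => p.1 * p.2).sum ∈ neuralIdeal Co := by
    apply list_sum_mem
    intro x hx
    obtain ⟨p, hpL, rfl⟩ := List.mem_map.mp hx
    exact Ideal.mul_mem_left _ _ (hsub (hLb p hpL).1)
  have hrJ : r ∈ neuralIdeal Co := by
    have hre : r = f - (L.map fun p => p.1 * p.2).sum := by rw [hfe]; ring
    rw [hre]; exact sub_mem hfJ hsumJ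
  have hr0 : r = 0 := by
    by_contra hr0
    obtain ⟨g, hgG, hgne, hgle⟩ := hdiv r hrJ hr0
    obtain ⟨σ, τ, -, hge⟩ := hgG.1
    apply hrc (leadDeg m r) (leadDeg_mem hr0) g hgG
    rw [hge, leadDeg_psm]
    rw [hge, leadDeg_psm] at hgle
    exact hgle
  rw [hr0, add_zero] at hfe
  have hs : leadDeg m' f ∈ ((L.map fun p : MvPolynomial (Fin n) (ZMod 2) ×
      MvPolynomial (Fin n) (ZMod 2) => p.1 * p.2).sum).support := by
    rw [← hfe]; exact leadDeg_mem hf0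
  obtain ⟨x, hxL, hx⟩ := mem_support_list_sum hs
  obtain ⟨p, hpL, rfl⟩ := List.mem_map.mp hxL
  obtain ⟨hpG, hbd⟩ := hLb p hpL
  have hd_le := leadDeg_le (m := m') hx
  have heq : leadDeg m' (p.1 * p.2) = leadDeg m' f :=
    m'.toSyn.injective (le_antisymm hbd hd_le)
  have hp2ne : p.2 ≠ 0 := by
    obtain ⟨σ, τ, -, hge⟩ := hpG.1
    rw [hge]; exact psm_ne_zero σ τ
  have hp1ne : p.1 ≠ 0 := by
    intro h0
    rw [h0, zero_mul] at hx
    simp at hx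
  refine ⟨p.2, hpG, hp2ne, ?_⟩
  rw [← heq, leadDeg_mul hp1ne hp2ne]
  exact self_le_add_left _ _
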